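/- Let f and g be polynomials over ℂ such that every zero of f − α in the ball B(0,r) (where α ∈ ℂ) is a zero of g − f of multiplicity strictly greater than the degree of f. If f − α and g − α have the same number of zeros counted with multiplicity in B(0,r), then f − α and g − α have exactly the same zeros with the same multiplicities in B(0,r). -/
import Mathlib


open Polynomial Metric

lemma aux_mult_le_natDegree (p : Polynomial ℂ) (a : ℂ) :
    p.rootMultiplicity a ≤ p.natDegree := by
  classical
  rw [← Polynomial.count_roots]
  exact (Multiset.count_le_card _ _).trans (Polynomial.card_roots' p)

lemma aux_mult_neg (p : Polynomial ℂ) (a : ℂ) :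
    (-p).rootMultiplicity a = p.rootMultiplicity a := by
  by_cases hp : p = 0
  · simp [hp]
  · have h : -p = C (-1 : ℂ) * p := by simp
    rw [h, Polynomial.rootMultiplicity_mul (by rw [← h]; exact neg_ne_zero.mpr hp),
      Polynomial.rootMultiplicity_C, zero_add]

open Classical in
theorem same_zeros_of_high_multiplicity (f g : Polynomial ℂ) (α : ℂ) (r : ℝ)
    (hr : 0 < r)
    (hmult : ∀ lam ∈ ball (0 : ℂ) r, (f - C α).eval lam = 0 →
      f.natDegree < (g - f).rootMultiplicity lam)
    (hcount :
      Multiset.card ((f - C α).roots.filter (fun z => z ∈ ball (0 : ℂ) r)) =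
      Multiset.card ((g - C α).roots.filter (fun z => z ∈ ball (0 : ℂ) r))) :
    ∀ lam ∈ ball (0 : ℂ) r,
      (f - C α).rootMultiplicity lam = (g - C α).rootMultiplicity lam := by
  have h0ball : (0 : ℂ) ∈ ball (0 : ℂ) r := by simpa using hr
  by_cases hf : f - C α = 0
  · -- f = C α; then every point of the ball is a root of f - C α
    have hgf : g - C α = g - f := by
      rw [sub_eq_zero] at hf
      rw [hf]
    have hg0 : g - C α = 0 := by
      by_contra hg
      have hroot : (g - C α).IsRoot 0 := by
        rw [hgf]
        have hm := hmult 0 h0ball (by simp [hf])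
        have hgf0 : g - f ≠ 0 := by rw [← hgf]; exact hg
        exact ((Polynomial.rootMultiplicity_pos hgf0).mp (Nat.lt_of_le_of_lt (Nat.zero_le _) hm))
      have hmem : (0 : ℂ) ∈ (g - C α).roots.filter (fun z => z ∈ ball (0 : ℂ) r) := by
        rw [Multiset.mem_filter]
        exact ⟨(Polynomial.mem_roots hg).mpr hroot, h0ball⟩
      have : ((g - C α).roots.filter (fun z => z ∈ ball (0 : ℂ) r)) = 0 := by
        rw [← Multiset.card_eq_zero, ← hcount, hf]
        simp
      rw [this] at hmem
      exact absurd hmem (Multiset.notMem_zero _)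
    intro lam _
    rw [hf, hg0]
  · -- main case: f - C α ≠ 0
    have hdeg : ∀ lam : ℂ, (f - C α).rootMultiplicity lam ≤ f.natDegree := by
      intro lam
      refine (aux_mult_le_natDegree _ lam).trans ?_
      calc (f - C α).natDegree ≤ max f.natDegree (C α).natDegree := natDegree_sub_le _ _
        _ ≤ f.natDegree := by simp
    have key : ∀ lam ∈ ball (0 : ℂ) r, (f - C α).eval lam = 0 →
        (g - C α).rootMultiplicity lam = (f - C α).rootMultiplicity lam := by
      intro lam hlam hroot
      have hm := hmult lam hlam hroot
      have hlt : (f - C α).rootMultiplicity lam < (g - f).rootMultiplicity lam :=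
        lt_of_le_of_lt (hdeg lam) hm
      have hg : g - C α ≠ 0 := by
        intro hg
        have hfg : g - f = -(f - C α) := by
          rw [sub_eq_zero] at hg
          rw [hg]; ring
        rw [hfg] at hlt
        have := aux_mult_neg (f - C α) lam
        omega
      have hsum : g - C α = (f - C α) + (g - f) := by ring
      have h1 : (f - C α).rootMultiplicity lam ≤ (g - C α).rootMultiplicity lam := by
        have := Polynomial.rootMultiplicity_add lam (p := f - C α) (q := g - f)
          (by rw [← hsum]; exact hg)
        rw [← hsum] at this
        omega
      have hneg : (f - g).rootMultiplicity lam = (g - f).rootMultiplicity lam := by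
        have h1 : f - g = -(g - f) := by ring
        rw [h1, aux_mult_neg]
      have hsum2 : f - C α = (g - C α) + (f - g) := by ring
      have h2 : (g - C α).rootMultiplicity lam ≤ (f - C α).rootMultiplicity lam := by
        have := Polynomial.rootMultiplicity_add lam (p := g - C α) (q := f - g)
          (by rw [← hsum2]; exact hf)
        rw [← hsum2, hneg] at this
        omega
      omega
    set A := (f - C α).roots.filter (fun z => z ∈ ball (0 : ℂ) r) with hA
    set B := (g - C α).roots.filter (fun z => z ∈ ball (0 : ℂ) r) with hB
    have hAB : A ≤ B := by
      rw [Multiset.le_iff_count]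
      intro z
      rw [hA, hB, Multiset.count_filter, Multiset.count_filter]
      split_ifs with hz
      · rw [Polynomial.count_roots, Polynomial.count_roots]
        by_cases hz0 : (f - C α).eval z = 0
        · rw [key z hz hz0]
        · rw [Polynomial.rootMultiplicity_eq_zero hz0]
          exact Nat.zero_le _
      · exact le_rfl
    have hEq : A = B := Multiset.eq_of_le_of_card_le hAB (le_of_eq hcount.symm)
    intro lam hlam
    have := congrArg (Multiset.count lam) hEq
    rw [hA, hB, Multiset.count_filter_of_pos hlam, Multiset.count_filter_of_pos hlam,
      Polynomial.count_roots, Polynomial.count_roots] at this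
    exact this
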